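/- One-set Boolean small-set expansion: for 0 < ρ < 1 and A ⊆ {-1,1}^n with |A|/2^n = α, the noise stability of the indicator satisfies Stab_ρ[1_A] ≤ α^{2/(1+ρ)}. -/

import Mathlib

open Finset

/-- `E[f(x) g(y)]` for a `ρ`-correlated pair of uniform random strings `(x, y)` in `{-1,1}^n`. -/
noncomputable def corrE {n : ℕ} (ρ : ℝ) (f g : (Fin n → Bool) → ℝ) : ℝ :=
  ∑ x : Fin n → Bool, ∑ y : Fin n → Bool,
    (2 ^ n : ℝ)⁻¹ * (∏ i, if x i = y i then (1 + ρ) / 2 else (1 - ρ) / 2) * f x * g y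

section AuxiliaryLemmas
open Real



-- Bernoulli
example (θ x : ℝ) (h0 : 0 ≤ θ) (h1 : θ ≤ 1) (hx : 0 ≤ x) : (1+x)^θ ≤ 1 + θ*x :=
  rpow_one_add_le_one_add_mul_self (by linarith) h0 h1

lemma psi_nonneg {p : ℝ} (hp1 : 1 < p) (hp2 : p < 2) {ε : ℝ} (hε0 : 0 ≤ ε) (hε1 : ε ≤ 1) :
    2*(p-1)*ε ≤ (1+ε)^(p-1) - (1-ε)^(p-1) := by
  set r := p - 1 with hr
  have hr0 : 0 < r := by simp [hr]; linarith
  have hr1 : r < 1 := by simp [hr]; linarith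
  have hmono : MonotoneOn (fun t => (1+t)^r - (1-t)^r - 2*r*t) (Set.Icc (0:ℝ) 1) := by
    apply monotoneOn_of_hasDerivWithinAt_nonneg (f' := fun t => r*(1+t)^(r-1) + r*(1-t)^(r-1) - 2*r)
      (convex_Icc 0 1)
    · apply ContinuousOn.sub
      apply ContinuousOn.sub
      · exact (continuous_const.add continuous_id).continuousOn.rpow_const (fun x _ => Or.inr hr0.le)
      · exact (continuous_const.sub continuous_id).continuousOn.rpow_const (fun x _ => Or.inr hr0.le)
      · exact (continuous_const.mul continuous_id).continuousOn
    · intro t ht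
      rw [interior_Icc] at ht
      have h1 : HasDerivAt (fun t : ℝ => (1+t)^r) (1 * r * (1+t)^(r-1)) t := by
        exact (HasDerivAt.const_add 1 (hasDerivAt_id t)).rpow_const (Or.inl (ne_of_gt (by simp only [id_eq]; linarith [ht.1.le])))
      have h2 : HasDerivAt (fun t : ℝ => (1-t)^r) ((-1) * r * (1-t)^(r-1)) t := by
        exact (HasDerivAt.const_sub 1 (hasDerivAt_id t)).rpow_const (Or.inl (ne_of_gt (by simp only [id_eq]; linarith [ht.2])))
      have h3 : HasDerivAt (fun t : ℝ => 2*r*t) (2*r) t := by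
        simpa using (hasDerivAt_id t).const_mul (2*r)
      have := (h1.sub h2).sub h3
      exact (this.congr_deriv (by ring)).hasDerivWithinAt
    · intro t ht
      rw [interior_Icc] at ht
      have hA : (0:ℝ) < (1+t)^(r-1) := rpow_pos_of_pos (by linarith [ht.1]) _
      have hB : (0:ℝ) < (1-t)^(r-1) := rpow_pos_of_pos (by linarith [ht.2]) _
      have hAB : (1:ℝ) ≤ (1+t)^(r-1) * (1-t)^(r-1) := by
        rw [← Real.mul_rpow (by linarith [ht.1]) (by linarith [ht.2])]
        apply Real.one_le_rpow_of_pos_of_le_one_of_nonpos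
        · nlinarith [ht.1, ht.2]
        · nlinarith [ht.1, ht.2]
        · linarith
      nlinarith [sq_nonneg ((1+t)^(r-1) - (1-t)^(r-1))]
  have h0 : (fun t : ℝ => (1+t)^r - (1-t)^r - 2*r*t) 0 = 0 := by norm_num
  have := hmono (Set.mem_Icc.2 ⟨le_refl 0, zero_le_one⟩) (Set.mem_Icc.2 ⟨hε0, hε1⟩) hε0
  rw [h0] at this
  have h2 : 0 ≤ (1+ε)^r - (1-ε)^r - 2*r*ε := by simpa using this
  linarith

lemma phi_nonneg {p : ℝ} (hp1 : 1 < p) (hp2 : p < 2) {ε : ℝ} (hε0 : 0 ≤ ε) (hε1 : ε ≤ 1) :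
    2 + p*(p-1)*ε^2 ≤ (1+ε)^p + (1-ε)^p := by
  have hmono : MonotoneOn (fun t => (1+t)^p + (1-t)^p - 2 - p*(p-1)*t^2) (Set.Icc (0:ℝ) 1) := by
    apply monotoneOn_of_hasDerivWithinAt_nonneg
      (f' := fun t => p*(1+t)^(p-1) - p*(1-t)^(p-1) - p*(p-1)*(2*t)) (convex_Icc 0 1)
    · apply ContinuousOn.sub
      apply ContinuousOn.sub
      apply ContinuousOn.add
      · exact (continuous_const.add continuous_id).continuousOn.rpow_const
          (fun x _ => Or.inr (by linarith))
      · exact (continuous_const.sub continuous_id).continuousOn.rpow_const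
          (fun x _ => Or.inr (by linarith))
      · exact continuousOn_const
      · exact (continuous_const.mul (continuous_pow 2)).continuousOn
    · intro t ht
      rw [interior_Icc] at ht
      have h1 : HasDerivAt (fun t : ℝ => (1+t)^p) (1 * p * (1+t)^(p-1)) t :=
        (HasDerivAt.const_add 1 (hasDerivAt_id t)).rpow_const (Or.inr hp1.le)
      have h2 : HasDerivAt (fun t : ℝ => (1-t)^p) ((-1) * p * (1-t)^(p-1)) t :=
        (HasDerivAt.const_sub 1 (hasDerivAt_id t)).rpow_const (Or.inr hp1.le)
      have h3 : HasDerivAt (fun t : ℝ => p*(p-1)*t^2) (p*(p-1)*(2*t)) t := by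
        have := (hasDerivAt_pow 2 t).const_mul (p*(p-1))
        simpa using this
      have := ((h1.add h2).sub (hasDerivAt_const t 2)).sub h3
      exact (this.congr_deriv (by ring)).hasDerivWithinAt
    · intro t ht
      rw [interior_Icc] at ht
      have := psi_nonneg hp1 hp2 ht.1.le ht.2.le
      nlinarith [this, hp1]
  have h0 : (fun t : ℝ => (1+t)^p + (1-t)^p - 2 - p*(p-1)*t^2) 0 = 0 := by norm_num
  have := hmono (Set.mem_Icc.2 ⟨le_refl 0, zero_le_one⟩) (Set.mem_Icc.2 ⟨hε0, hε1⟩) hε0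
  rw [h0] at this
  have h2 : 0 ≤ (1+ε)^p + (1-ε)^p - 2 - p*(p-1)*ε^2 := by simpa using this
  linarith

lemma core_ineq {ρ : ℝ} (hρ0 : 0 < ρ) (hρ1 : ρ < 1) {ε : ℝ} (hε0 : 0 ≤ ε) (hε1 : ε ≤ 1) :
    ((1+ε)^(1/(1+ρ)) + (1-ε)^(1/(1+ρ)))^2 + ρ*((1+ε)^(1/(1+ρ)) - (1-ε)^(1/(1+ρ)))^2 ≤ 4 := by
  set s : ℝ := 1/(1+ρ) with hs
  set p : ℝ := 1+ρ with hp
  have hp1 : 1 < p := by simp [hp]; linarith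
  have hp2 : p < 2 := by simp [hp]; linarith
  have hp0 : (0:ℝ) < p := by linarith
  set X : ℝ := (1+ε)^s with hX
  set Y : ℝ := (1-ε)^s with hY
  have hXp : X^p = 1+ε := by
    rw [hX, ← Real.rpow_mul (by linarith)]
    rw [show s*p = 1 by rw [hs, hp]; field_simp]
    exact Real.rpow_one _
  have hYp : Y^p = 1-ε := by
    rw [hY, ← Real.rpow_mul (by linarith)]
    rw [show s*p = 1 by rw [hs, hp]; field_simp]
    exact Real.rpow_one _
  have hX1 : 1 ≤ X := by
    rw [hX]
    calc (1:ℝ) = 1^s := (Real.one_rpow s).symm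
      _ ≤ (1+ε)^s := Real.rpow_le_rpow zero_le_one (by linarith) (by positivity)
  have hY0 : 0 ≤ Y := Real.rpow_nonneg (by linarith) _
  have hYX : Y ≤ X := Real.rpow_le_rpow (by linarith) (by linarith) (by positivity)
  set a : ℝ := (X+Y)/2 with ha
  set b : ℝ := (X-Y)/2 with hb
  have ha0 : 0 < a := by rw [ha]; linarith
  have hb0 : 0 ≤ b := by rw [hb]; linarith
  have hba : b ≤ a := by rw [ha, hb]; linarith
  have hba' : b/a ≤ 1 := (div_le_one ha0).2 hba
  have hba0 : 0 ≤ b/a := div_nonneg hb0 ha0.le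
  -- key1 scaled
  have h5 := phi_nonneg hp1 hp2 hba0 hba'
  have e1 : a^p * (1+b/a)^p = X^p := by
    rw [← Real.mul_rpow ha0.le (by linarith)]
    congr 1
    field_simp
    rw [ha, hb]; ring
  have e2 : a^p * (1-b/a)^p = Y^p := by
    rw [← Real.mul_rpow ha0.le (by linarith)]
    congr 1
    field_simp
    rw [ha, hb]; ring
  have hap : (0:ℝ) < a^p := Real.rpow_pos_of_pos ha0 _
  have h6 : a^p * (2 + p*(p-1)*(b/a)^2) ≤ 2 := by
    calc a^p * (2 + p*(p-1)*(b/a)^2) ≤ a^p * ((1+b/a)^p + (1-b/a)^p) :=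
          mul_le_mul_of_nonneg_left h5 hap.le
      _ = X^p + Y^p := by rw [mul_add, e1, e2]
      _ = 2 := by rw [hXp, hYp]; ring
  -- Bernoulli
  have h7 : (1 + ρ*(b/a)^2)^(p/2) ≤ 1 + (p/2)*(ρ*(b/a)^2) :=
    rpow_one_add_le_one_add_mul_self
      (by nlinarith [mul_nonneg hρ0.le (sq_nonneg (b/a))]) (by positivity) (by linarith)
  have h8 : (a^2 + ρ*b^2)^(p/2) = a^p * (1 + ρ*(b/a)^2)^(p/2) := by
    have hrw : a^2 + ρ*b^2 = a^2 * (1 + ρ*(b/a)^2) := by field_simp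
    rw [hrw, Real.mul_rpow (sq_nonneg a) (by positivity)]
    congr 1
    rw [← Real.rpow_natCast a 2, ← Real.rpow_mul ha0.le]
    congr 1
    push_cast; ring
  have h9 : (a^2 + ρ*b^2)^(p/2) ≤ 1 := by
    rw [h8]
    calc a^p * (1 + ρ*(b/a)^2)^(p/2) ≤ a^p * (1 + (p/2)*(ρ*(b/a)^2)) :=
          mul_le_mul_of_nonneg_left h7 hap.le
      _ ≤ 1 := by nlinarith [h6]
  have h10 : a^2 + ρ*b^2 ≤ 1 := by
    by_contra h
    push_neg at h
    have := Real.rpow_lt_rpow (by norm_num) h (by positivity : (0:ℝ) < p/2)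
    rw [Real.one_rpow] at this
    linarith
  have : (X+Y)^2 + ρ*(X-Y)^2 = 4*(a^2+ρ*b^2) := by rw [ha, hb]; ring
  linarith [mul_le_mul_of_nonneg_left h10 (by norm_num : (0:ℝ) ≤ 4)]

lemma twoPoint_aux {ρ a₀ a₁ : ℝ} (hρ0 : 0 < ρ) (hρ1 : ρ < 1) (h1 : 0 ≤ a₁) (h01 : a₁ ≤ a₀) :
    (a₀^(1/(1+ρ)) + a₁^(1/(1+ρ)))^2 + ρ*(a₀^(1/(1+ρ)) - a₁^(1/(1+ρ)))^2
      ≤ 4*(((a₀+a₁)/2)^(1/(1+ρ)))^2 := by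
  set s : ℝ := 1/(1+ρ) with hs
  have hs0 : s ≠ 0 := by rw [hs]; positivity
  rcases eq_or_lt_of_le (h1.trans h01) with h0 | h0
  · have ha₀ : a₀ = 0 := h0.symm
    have ha₁ : a₁ = 0 := le_antisymm (ha₀ ▸ h01) h1
    rw [ha₀, ha₁]
    simp [Real.zero_rpow hs0]
  · have hm : (0:ℝ) < (a₀+a₁)/2 := by linarith
    set ε : ℝ := (a₀-a₁)/(a₀+a₁) with hε
    have hsum : (0:ℝ) < a₀ + a₁ := by linarith
    have hε0 : 0 ≤ ε := div_nonneg (by linarith) hsum.le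
    have hε1 : ε ≤ 1 := (div_le_one hsum).2 (by linarith)
    have r₀ : a₀^s = ((a₀+a₁)/2)^s * (1+ε)^s := by
      rw [← Real.mul_rpow hm.le (by linarith)]
      congr 1
      rw [hε]; field_simp; ring
    have r₁ : a₁^s = ((a₀+a₁)/2)^s * (1-ε)^s := by
      rw [← Real.mul_rpow hm.le (by linarith)]
      congr 1
      rw [hε]; field_simp; ring
    have hcore := core_ineq hρ0 hρ1 hε0 hε1
    rw [r₀, r₁]
    calc (((a₀+a₁)/2)^s * (1+ε)^s + ((a₀+a₁)/2)^s * (1-ε)^s)^2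
          + ρ*(((a₀+a₁)/2)^s * (1+ε)^s - ((a₀+a₁)/2)^s * (1-ε)^s)^2
        = (((a₀+a₁)/2)^s)^2 * (((1+ε)^(1/(1+ρ)) + (1-ε)^(1/(1+ρ)))^2
            + ρ*((1+ε)^(1/(1+ρ)) - (1-ε)^(1/(1+ρ)))^2) := by rw [← hs]; ring
      _ ≤ (((a₀+a₁)/2)^s)^2 * 4 := mul_le_mul_of_nonneg_left hcore (sq_nonneg _)
      _ = 4*(((a₀+a₁)/2)^s)^2 := by ring

lemma twoPoint {ρ a₀ a₁ : ℝ} (hρ0 : 0 < ρ) (hρ1 : ρ < 1) (h0 : 0 ≤ a₀) (h1 : 0 ≤ a₁) :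
    (a₀^(1/(1+ρ)) + a₁^(1/(1+ρ)))^2 + ρ*(a₀^(1/(1+ρ)) - a₁^(1/(1+ρ)))^2
      ≤ 4*(((a₀+a₁)/2)^(1/(1+ρ)))^2 := by
  rcases le_total a₁ a₀ with h | h
  · exact twoPoint_aux hρ0 hρ1 h1 h
  · have := twoPoint_aux hρ0 hρ1 h0 h
    rw [add_comm a₁ a₀] at this
    linarith [this]




lemma sum_split {n : ℕ} (F : (Fin (n+1) → Bool) → ℝ) :
    ∑ x : Fin (n+1) → Bool, F x = ∑ a : Bool, ∑ x : Fin n → Bool, F (Fin.cons a x) := by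
  rw [← (Fintype.sum_equiv (Fin.consEquiv fun _ => Bool)
    (fun q : Bool × (Fin n → Bool) => F (Fin.cons q.1 q.2)) F (fun q => rfl)),
    Fintype.sum_prod_type]

lemma corrE_succ {n : ℕ} (ρ : ℝ) (f g : (Fin (n+1) → Bool) → ℝ) :
    corrE ρ f g = ∑ a : Bool, ∑ b : Bool, ((if a = b then (1+ρ)/2 else (1-ρ)/2)/2) *
      corrE ρ (fun x => f (Fin.cons a x)) (fun y => g (Fin.cons b y)) := by
  unfold corrE
  rw [sum_split]
  apply Finset.sum_congr rfl
  intro a _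
  rw [Finset.sum_congr rfl (fun x' (_ : x' ∈ univ) => sum_split
    (fun y => (2 ^ (n+1) : ℝ)⁻¹ * (∏ i, if Fin.cons a x' i = y i then (1 + ρ) / 2 else (1 - ρ) / 2)
      * f (Fin.cons a x') * g y))]
  rw [Finset.sum_comm]
  apply Finset.sum_congr rfl
  intro b _
  rw [Finset.mul_sum]
  apply Finset.sum_congr rfl
  intro x' _
  rw [Finset.mul_sum]
  apply Finset.sum_congr rfl
  intro y' _
  rw [Fin.prod_univ_succ]
  simp only [Fin.cons_zero, Fin.cons_succ]
  rw [pow_succ]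
  ring

def sect {n : ℕ} (A : Finset (Fin (n+1) → Bool)) (a : Bool) : Finset (Fin n → Bool) :=
  univ.filter (fun x => Fin.cons a x ∈ A)

lemma sum_split' {M : Type*} [AddCommMonoid M] {n : ℕ} (F : (Fin (n+1) → Bool) → M) :
    ∑ x : Fin (n+1) → Bool, F x = ∑ a : Bool, ∑ x : Fin n → Bool, F (Fin.cons a x) := by
  rw [← (Fintype.sum_equiv (Fin.consEquiv fun _ => Bool)
    (fun q : Bool × (Fin n → Bool) => F (Fin.cons q.1 q.2)) F (fun q => rfl)),
    Fintype.sum_prod_type]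

lemma card_split {n : ℕ} (A : Finset (Fin (n+1) → Bool)) :
    A.card = (sect A false).card + (sect A true).card := by
  have h : ∀ (m : ℕ) (B : Finset (Fin m → Bool)),
      B.card = ∑ x : Fin m → Bool, if x ∈ B then 1 else 0 := by
    intro m B
    rw [← Finset.card_filter]
    congr 1
    simp
  rw [h (n+1) A, sum_split', Fintype.sum_bool]
  have h2 : ∀ a : Bool, ∑ x : Fin n → Bool, (if Fin.cons a x ∈ A then 1 else 0)
      = (sect A a).card := by
    intro a
    rw [sect, Finset.card_filter]
  rw [h2, h2]
  ring

lemma corrE_ind_succ {n : ℕ} (ρ : ℝ) (A B : Finset (Fin (n+1) → Bool)) :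
    corrE ρ (fun x => if x ∈ A then (1:ℝ) else 0) (fun y => if y ∈ B then (1:ℝ) else 0)
    = ∑ a : Bool, ∑ b : Bool, ((if a = b then (1+ρ)/2 else (1-ρ)/2)/2) *
      corrE ρ (fun x => if x ∈ sect A a then (1:ℝ) else 0)
        (fun y => if y ∈ sect B b then (1:ℝ) else 0) := by
  rw [corrE_succ]
  apply Finset.sum_congr rfl
  intro a _
  apply Finset.sum_congr rfl
  intro b _
  have hf : (fun x => if Fin.cons a x ∈ A then (1:ℝ) else 0)
      = fun x => if x ∈ sect A a then (1:ℝ) else 0 := by funext x; simp [sect]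
  have hg : (fun y => if Fin.cons b y ∈ B then (1:ℝ) else 0)
      = fun y => if y ∈ sect B b then (1:ℝ) else 0 := by funext y; simp [sect]
  rw [hf, hg]

set_option maxHeartbeats 1000000 in
lemma corrE_le (ρ : ℝ) (hρ0 : 0 < ρ) (hρ1 : ρ < 1) :
    ∀ (n : ℕ) (A B : Finset (Fin n → Bool)),
    corrE ρ (fun x => if x ∈ A then (1:ℝ) else 0) (fun y => if y ∈ B then (1:ℝ) else 0)
      ≤ ((A.card : ℝ)/2^n)^(1/(1+ρ)) * ((B.card : ℝ)/2^n)^(1/(1+ρ)) := by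
  intro n
  induction n with
  | zero =>
    intro A B
    rcases Finset.eq_empty_or_nonempty A with hA | hA
    · subst hA
      simp only [corrE, Finset.notMem_empty, if_false, mul_zero, zero_mul,
        Finset.sum_const_zero]
      positivity
    rcases Finset.eq_empty_or_nonempty B with hB | hB
    · subst hB
      simp only [corrE, Finset.notMem_empty, if_false, mul_zero, zero_mul,
        Finset.sum_const_zero]
      positivity
    have hcard : Fintype.card (Fin 0 → Bool) = 1 := by simp
    have hAc : A.card = 1 := le_antisymm
      ((Finset.card_le_univ A).trans (by simp [Finset.card_univ, hcard]))
      hA.card_pos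
    have hBc : B.card = 1 := le_antisymm
      ((Finset.card_le_univ B).trans (by simp [Finset.card_univ, hcard]))
      hB.card_pos
    have hAu : A = Finset.univ := Finset.eq_univ_of_card A (by rw [hAc, hcard])
    have hBu : B = Finset.univ := Finset.eq_univ_of_card B (by rw [hBc, hcard])
    subst hAu
    subst hBu
    simp [corrE, Finset.card_univ, hcard, Real.one_rpow]
  | succ n ih =>
    intro A B
    rw [corrE_ind_succ]
    simp only [Fintype.sum_bool, reduceIte]
    set s : ℝ := 1/(1+ρ) with hs
    set xf : ℝ := (((sect A false).card : ℝ)/2^n)^s with hxf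
    set xt : ℝ := (((sect A true).card : ℝ)/2^n)^s with hxt
    set yf : ℝ := (((sect B false).card : ℝ)/2^n)^s with hyf
    set yt : ℝ := (((sect B true).card : ℝ)/2^n)^s with hyt
    set P : ℝ := ((A.card : ℝ)/2^(n+1))^s with hP
    set Q : ℝ := ((B.card : ℝ)/2^(n+1))^s with hQ
    have ett := ih (sect A true) (sect B true)
    have etf := ih (sect A true) (sect B false)
    have eft := ih (sect A false) (sect B true)
    have eff := ih (sect A false) (sect B false)
    have hPA : ((((sect A false).card : ℝ)/2^n) + (((sect A true).card : ℝ)/2^n))/2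
        = (A.card : ℝ)/2^(n+1) := by
      rw [card_split A]
      push_cast
      rw [pow_succ]
      ring
    have hQB : ((((sect B false).card : ℝ)/2^n) + (((sect B true).card : ℝ)/2^n))/2
        = (B.card : ℝ)/2^(n+1) := by
      rw [card_split B]
      push_cast
      rw [pow_succ]
      ring
    have starA := twoPoint (a₀ := ((sect A false).card : ℝ)/2^n)
      (a₁ := ((sect A true).card : ℝ)/2^n) hρ0 hρ1 (by positivity) (by positivity)
    have starB := twoPoint (a₀ := ((sect B false).card : ℝ)/2^n)
      (a₁ := ((sect B true).card : ℝ)/2^n) hρ0 hρ1 (by positivity) (by positivity)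
    rw [hPA] at starA
    rw [hQB] at starB
    rw [← hxf, ← hxt, ← hP] at starA
    rw [← hyf, ← hyt, ← hQ] at starB
    set u : ℝ := xf + xt with hu
    set v : ℝ := xf - xt with hv
    set u' : ℝ := yf + yt with hu'
    set v' : ℝ := yf - yt with hv'
    have hCS : (u*u' + ρ*v*v')^2 ≤ (u^2+ρ*v^2)*(u'^2+ρ*v'^2) := by
      nlinarith [mul_nonneg hρ0.le (sq_nonneg (u*v' - v*u'))]
    have hPQ : (0:ℝ) ≤ P := by rw [hP]; positivity
    have hQQ : (0:ℝ) ≤ Q := by rw [hQ]; positivity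
    have hmul : (u^2+ρ*v^2)*(u'^2+ρ*v'^2) ≤ (4*(P*Q))^2 := by
      calc (u^2+ρ*v^2)*(u'^2+ρ*v'^2) ≤ (4*P^2)*(4*Q^2) := by
            apply mul_le_mul starA starB
              (add_nonneg (sq_nonneg u') (mul_nonneg hρ0.le (sq_nonneg v')))
              (by positivity)
        _ = (4*(P*Q))^2 := by ring
    have habs : u*u' + ρ*v*v' ≤ 4*(P*Q) := by
      have h2 := hCS.trans hmul
      calc u*u' + ρ*v*v' ≤ |u*u' + ρ*v*v'| := le_abs_self _
        _ = Real.sqrt ((u*u' + ρ*v*v')^2) := (Real.sqrt_sq_eq_abs _).symm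
        _ ≤ Real.sqrt ((4*(P*Q))^2) := Real.sqrt_le_sqrt h2
        _ = 4*(P*Q) := Real.sqrt_sq (by positivity)
    have w1 : (0:ℝ) ≤ (1+ρ)/2/2 := by linarith
    have w2 : (0:ℝ) ≤ (1-ρ)/2/2 := by linarith
    calc (1+ρ)/2/2 * corrE ρ (fun x => if x ∈ sect A true then (1:ℝ) else 0)
            (fun y => if y ∈ sect B true then (1:ℝ) else 0)
          + (1-ρ)/2/2 * corrE ρ (fun x => if x ∈ sect A true then (1:ℝ) else 0)
            (fun y => if y ∈ sect B false then (1:ℝ) else 0)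
          + ((1-ρ)/2/2 * corrE ρ (fun x => if x ∈ sect A false then (1:ℝ) else 0)
            (fun y => if y ∈ sect B true then (1:ℝ) else 0)
          + (1+ρ)/2/2 * corrE ρ (fun x => if x ∈ sect A false then (1:ℝ) else 0)
            (fun y => if y ∈ sect B false then (1:ℝ) else 0))
        ≤ (1+ρ)/2/2 * (xt*yt) + (1-ρ)/2/2 * (xt*yf) + ((1-ρ)/2/2 * (xf*yt)
            + (1+ρ)/2/2 * (xf*yf)) := by
          exact add_le_add (add_le_add (mul_le_mul_of_nonneg_left ett w1)
            (mul_le_mul_of_nonneg_left etf w2))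
            (add_le_add (mul_le_mul_of_nonneg_left eft w2)
              (mul_le_mul_of_nonneg_left eff w1))
      _ = (u*u' + ρ*v*v')/4 := by rw [hu, hv, hu', hv']; ring
      _ ≤ 4*(P*Q)/4 := by
          have h4 : (0:ℝ) < 4 := by norm_num
          exact (div_le_div_iff_of_pos_right h4).2 habs
      _ = P*Q := by ring


end AuxiliaryLemmas

/-- One-set Boolean small-set expansion: for `0 < ρ < 1` and `A ⊆ {-1,1}^n` of density `α`,
`Stab_ρ[1_A] = P[x ∈ A, y ∈ A] ≤ α^{2/(1+ρ)}`. -/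
theorem one_set_small_set_expansion (n : ℕ) (ρ : ℝ) (hρ0 : 0 < ρ) (hρ1 : ρ < 1)
    (A : Finset (Fin n → Bool)) (α : ℝ) (hα : α = (A.card : ℝ) / 2 ^ n) :
    corrE ρ (fun x => if x ∈ A then 1 else 0) (fun y => if y ∈ A then 1 else 0)
      ≤ α ^ (2 / (1 + ρ)) := by
  subst hα
  have h1ρ : (0:ℝ) < 1 + ρ := by linarith
  have h2 : (0:ℝ) < 1/(1+ρ) := div_pos one_pos h1ρ
  calc corrE ρ (fun x => if x ∈ A then 1 else 0) (fun y => if y ∈ A then 1 else 0)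
      ≤ ((A.card : ℝ)/2^n)^(1/(1+ρ)) * ((A.card : ℝ)/2^n)^(1/(1+ρ)) :=
        corrE_le ρ hρ0 hρ1 n A A
    _ = ((A.card : ℝ)/2^n) ^ (2/(1+ρ)) := by
        rw [← Real.rpow_add' (by positivity) (by intro hc; nlinarith : 1/(1+ρ)+1/(1+ρ) ≠ 0)]
        congr 1
        ring
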